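/- For every α ∈ F, the set S_α = {e_{11}+e_{12}, e_{21}+e_{22}, e_{22}+e_{23}, e_{32}+e_{33}, e_{11}+α·e_{33}} of 3×3 matrices is an irredundant generating set for M_3(F): it generates M_3(F) as a unital F-algebra and no proper subset does. -/

import Mathlib

open Matrix

section Aux

variable (F : Type*) [Field F]

/-- Matrices whose (0,1) and (0,2) entries vanish. -/
def stmt19S1 : Subalgebra F (Matrix (Fin 3) (Fin 3) F) where
  carrier := {M | M 0 1 = 0 ∧ M 0 2 = 0}
  mul_mem' := by
    rintro a b ⟨ha1, ha2⟩ ⟨hb1, hb2⟩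
    constructor <;> simp_all [Matrix.mul_apply, Fin.sum_univ_three]
  one_mem' := by constructor <;> simp [Matrix.one_apply]
  add_mem' := by
    rintro a b ⟨ha1, ha2⟩ ⟨hb1, hb2⟩
    constructor <;> simp_all [Matrix.add_apply]
  zero_mem' := by constructor <;> simp
  algebraMap_mem' := by
    intro r; constructor <;> simp [Matrix.algebraMap_matrix_apply]

/-- Matrices whose (1,0) and (2,0) entries vanish. -/
def stmt19S2 : Subalgebra F (Matrix (Fin 3) (Fin 3) F) where
  carrier := {M | M 1 0 = 0 ∧ M 2 0 = 0}
  mul_mem' := by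
    rintro a b ⟨ha1, ha2⟩ ⟨hb1, hb2⟩
    constructor <;> simp_all [Matrix.mul_apply, Fin.sum_univ_three]
  one_mem' := by constructor <;> simp [Matrix.one_apply]
  add_mem' := by
    rintro a b ⟨ha1, ha2⟩ ⟨hb1, hb2⟩
    constructor <;> simp_all [Matrix.add_apply]
  zero_mem' := by constructor <;> simp
  algebraMap_mem' := by
    intro r; constructor <;> simp [Matrix.algebraMap_matrix_apply]

/-- Matrices whose (0,2) and (1,2) entries vanish. -/
def stmt19S3 : Subalgebra F (Matrix (Fin 3) (Fin 3) F) where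
  carrier := {M | M 0 2 = 0 ∧ M 1 2 = 0}
  mul_mem' := by
    rintro a b ⟨ha1, ha2⟩ ⟨hb1, hb2⟩
    constructor <;> simp_all [Matrix.mul_apply, Fin.sum_univ_three]
  one_mem' := by constructor <;> simp [Matrix.one_apply]
  add_mem' := by
    rintro a b ⟨ha1, ha2⟩ ⟨hb1, hb2⟩
    constructor <;> simp_all [Matrix.add_apply]
  zero_mem' := by constructor <;> simp
  algebraMap_mem' := by
    intro r; constructor <;> simp [Matrix.algebraMap_matrix_apply]

/-- Matrices whose (2,0) and (2,1) entries vanish. -/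
def stmt19S4 : Subalgebra F (Matrix (Fin 3) (Fin 3) F) where
  carrier := {M | M 2 0 = 0 ∧ M 2 1 = 0}
  mul_mem' := by
    rintro a b ⟨ha1, ha2⟩ ⟨hb1, hb2⟩
    constructor <;> simp_all [Matrix.mul_apply, Fin.sum_univ_three]
  one_mem' := by constructor <;> simp [Matrix.one_apply]
  add_mem' := by
    rintro a b ⟨ha1, ha2⟩ ⟨hb1, hb2⟩
    constructor <;> simp_all [Matrix.add_apply]
  zero_mem' := by constructor <;> simp
  algebraMap_mem' := by
    intro r; constructor <;> simp [Matrix.algebraMap_matrix_apply]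

/-- Matrices preserving the line spanned by `(1,-1,1)`. -/
def stmt19S5 : Subalgebra F (Matrix (Fin 3) (Fin 3) F) where
  carrier := {M | (M 0 0 - M 0 1 + M 0 2) + (M 1 0 - M 1 1 + M 1 2) = 0 ∧
    (M 1 0 - M 1 1 + M 1 2) + (M 2 0 - M 2 1 + M 2 2) = 0}
  mul_mem' := by
    rintro M N ⟨hM1, hM2⟩ ⟨hN1, hN2⟩
    simp only [Set.mem_setOf_eq, Matrix.mul_apply, Fin.sum_univ_three]
    constructor
    · linear_combination (M 0 1 + M 1 1 - M 0 2 - M 1 2) * hN1 +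
        (M 0 2 + M 1 2) * hN2 + (N 0 0 - N 0 1 + N 0 2) * hM1
    · linear_combination (M 1 1 + M 2 1 - M 1 2 - M 2 2) * hN1 +
        (M 1 2 + M 2 2) * hN2 + (N 0 0 - N 0 1 + N 0 2) * hM2
  one_mem' := by constructor <;> simp [Matrix.one_apply]
  add_mem' := by
    rintro a b ⟨ha1, ha2⟩ ⟨hb1, hb2⟩
    refine ⟨?_, ?_⟩ <;> simp only [Set.mem_setOf_eq, Matrix.add_apply]
    · linear_combination ha1 + hb1
    · linear_combination ha2 + hb2
  zero_mem' := by constructor <;> simp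
  algebraMap_mem' := by
    intro r; constructor <;> simp [Matrix.algebraMap_matrix_apply]

theorem stmt19_adjoin_ne_top {T : Set (Matrix (Fin 3) (Fin 3) F)}
    (K : Subalgebra F (Matrix (Fin 3) (Fin 3) F)) (hTK : T ⊆ K)
    (x : Matrix (Fin 3) (Fin 3) F) (hx : x ∉ K) : Algebra.adjoin F T ≠ ⊤ := by
  intro h
  exact hx (Algebra.adjoin_le hTK (h.symm ▸ (trivial : x ∈ (⊤ : Subalgebra F _))))

end Aux

set_option maxHeartbeats 2000000 in
theorem stmt_19 (F : Type*) [Field F] (α : F) :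
    Algebra.adjoin F
      ({!![1,1,0;0,0,0;0,0,0], !![0,0,0;1,1,0;0,0,0], !![0,0,0;0,1,1;0,0,0],
        !![0,0,0;0,0,0;0,1,1], !![1,0,0;0,0,0;0,0,α]} :
        Set (Matrix (Fin 3) (Fin 3) F)) = ⊤ ∧
    ∀ T ⊂ ({!![1,1,0;0,0,0;0,0,0], !![0,0,0;1,1,0;0,0,0], !![0,0,0;0,1,1;0,0,0],
        !![0,0,0;0,0,0;0,1,1], !![1,0,0;0,0,0;0,0,α]} :
        Set (Matrix (Fin 3) (Fin 3) F)),
      Algebra.adjoin F T ≠ ⊤ := by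
  set S : Set (Matrix (Fin 3) (Fin 3) F) :=
    {!![1,1,0;0,0,0;0,0,0], !![0,0,0;1,1,0;0,0,0], !![0,0,0;0,1,1;0,0,0],
      !![0,0,0;0,0,0;0,1,1], !![1,0,0;0,0,0;0,0,α]} with hS
  have hA : (!![1,1,0;0,0,0;0,0,0] : Matrix (Fin 3) (Fin 3) F) ∈ Algebra.adjoin F S :=
    Algebra.subset_adjoin (by simp [hS])
  have hB : (!![0,0,0;1,1,0;0,0,0] : Matrix (Fin 3) (Fin 3) F) ∈ Algebra.adjoin F S :=
    Algebra.subset_adjoin (by simp [hS])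
  have hC : (!![0,0,0;0,1,1;0,0,0] : Matrix (Fin 3) (Fin 3) F) ∈ Algebra.adjoin F S :=
    Algebra.subset_adjoin (by simp [hS])
  have hD : (!![0,0,0;0,0,0;0,1,1] : Matrix (Fin 3) (Fin 3) F) ∈ Algebra.adjoin F S :=
    Algebra.subset_adjoin (by simp [hS])
  have hE : (!![1,0,0;0,0,0;0,0,α] : Matrix (Fin 3) (Fin 3) F) ∈ Algebra.adjoin F S :=
    Algebra.subset_adjoin (by simp [hS])
  constructor
  · -- generation
    have h11 : (!![1,0,0;0,0,0;0,0,0] : Matrix (Fin 3) (Fin 3) F) ∈ Algebra.adjoin F S := by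
      have h := mul_mem hA hE
      have e : (!![1,1,0;0,0,0;0,0,0] : Matrix (Fin 3) (Fin 3) F) * !![1,0,0;0,0,0;0,0,α] =
          !![1,0,0;0,0,0;0,0,0] := by
        ext i j; fin_cases i <;> fin_cases j <;> simp [Matrix.mul_fin_three]
      rwa [e] at h
    have h12 : (!![0,1,0;0,0,0;0,0,0] : Matrix (Fin 3) (Fin 3) F) ∈ Algebra.adjoin F S := by
      have h := sub_mem hA h11
      have e : (!![1,1,0;0,0,0;0,0,0] : Matrix (Fin 3) (Fin 3) F) - !![1,0,0;0,0,0;0,0,0] =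
          !![0,1,0;0,0,0;0,0,0] := by
        ext i j; fin_cases i <;> fin_cases j <;> simp [Matrix.vecHead, Matrix.vecTail]
      rwa [e] at h
    have h21 : (!![0,0,0;1,0,0;0,0,0] : Matrix (Fin 3) (Fin 3) F) ∈ Algebra.adjoin F S := by
      have h := mul_mem hB h11
      have e : (!![0,0,0;1,1,0;0,0,0] : Matrix (Fin 3) (Fin 3) F) * !![1,0,0;0,0,0;0,0,0] =
          !![0,0,0;1,0,0;0,0,0] := by
        ext i j; fin_cases i <;> fin_cases j <;> simp [Matrix.mul_fin_three]
      rwa [e] at h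
    have h22 : (!![0,0,0;0,1,0;0,0,0] : Matrix (Fin 3) (Fin 3) F) ∈ Algebra.adjoin F S := by
      have h := sub_mem hB h21
      have e : (!![0,0,0;1,1,0;0,0,0] : Matrix (Fin 3) (Fin 3) F) - !![0,0,0;1,0,0;0,0,0] =
          !![0,0,0;0,1,0;0,0,0] := by
        ext i j; fin_cases i <;> fin_cases j <;> simp [Matrix.vecHead, Matrix.vecTail]
      rwa [e] at h
    have h23 : (!![0,0,0;0,0,1;0,0,0] : Matrix (Fin 3) (Fin 3) F) ∈ Algebra.adjoin F S := by
      have h := sub_mem hC h22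
      have e : (!![0,0,0;0,1,1;0,0,0] : Matrix (Fin 3) (Fin 3) F) - !![0,0,0;0,1,0;0,0,0] =
          !![0,0,0;0,0,1;0,0,0] := by
        ext i j; fin_cases i <;> fin_cases j <;> simp [Matrix.vecHead, Matrix.vecTail]
      rwa [e] at h
    have h32 : (!![0,0,0;0,0,0;0,1,0] : Matrix (Fin 3) (Fin 3) F) ∈ Algebra.adjoin F S := by
      have h := mul_mem hD h22
      have e : (!![0,0,0;0,0,0;0,1,1] : Matrix (Fin 3) (Fin 3) F) * !![0,0,0;0,1,0;0,0,0] =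
          !![0,0,0;0,0,0;0,1,0] := by
        ext i j; fin_cases i <;> fin_cases j <;> simp [Matrix.mul_fin_three]
      rwa [e] at h
    have h33 : (!![0,0,0;0,0,0;0,0,1] : Matrix (Fin 3) (Fin 3) F) ∈ Algebra.adjoin F S := by
      have h := sub_mem hD h32
      have e : (!![0,0,0;0,0,0;0,1,1] : Matrix (Fin 3) (Fin 3) F) - !![0,0,0;0,0,0;0,1,0] =
          !![0,0,0;0,0,0;0,0,1] := by
        ext i j; fin_cases i <;> fin_cases j <;> simp [Matrix.vecHead, Matrix.vecTail]
      rwa [e] at h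
    have h13 : (!![0,0,1;0,0,0;0,0,0] : Matrix (Fin 3) (Fin 3) F) ∈ Algebra.adjoin F S := by
      have h := mul_mem h12 h23
      have e : (!![0,1,0;0,0,0;0,0,0] : Matrix (Fin 3) (Fin 3) F) * !![0,0,0;0,0,1;0,0,0] =
          !![0,0,1;0,0,0;0,0,0] := by
        ext i j; fin_cases i <;> fin_cases j <;> simp [Matrix.mul_fin_three]
      rwa [e] at h
    have h31 : (!![0,0,0;0,0,0;1,0,0] : Matrix (Fin 3) (Fin 3) F) ∈ Algebra.adjoin F S := by
      have h := mul_mem h32 h21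
      have e : (!![0,0,0;0,0,0;0,1,0] : Matrix (Fin 3) (Fin 3) F) * !![0,0,0;1,0,0;0,0,0] =
          !![0,0,0;0,0,0;1,0,0] := by
        ext i j; fin_cases i <;> fin_cases j <;> simp [Matrix.mul_fin_three]
      rwa [e] at h
    rw [eq_top_iff]
    intro M _
    have hM : M = M 0 0 • !![1,0,0;0,0,0;0,0,0] + M 0 1 • !![0,1,0;0,0,0;0,0,0]
        + M 0 2 • !![0,0,1;0,0,0;0,0,0]
        + M 1 0 • !![0,0,0;1,0,0;0,0,0] + M 1 1 • !![0,0,0;0,1,0;0,0,0]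
        + M 1 2 • !![0,0,0;0,0,1;0,0,0]
        + M 2 0 • !![0,0,0;0,0,0;1,0,0] + M 2 1 • !![0,0,0;0,0,0;0,1,0]
        + M 2 2 • !![0,0,0;0,0,0;0,0,1] := by
      ext i j; fin_cases i <;> fin_cases j <;> simp [Matrix.vecHead, Matrix.vecTail]
    rw [hM]
    exact add_mem (add_mem (add_mem (add_mem (add_mem (add_mem (add_mem (add_mem
      (SMulMemClass.smul_mem _ h11) (SMulMemClass.smul_mem _ h12))
      (SMulMemClass.smul_mem _ h13)) (SMulMemClass.smul_mem _ h21))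
      (SMulMemClass.smul_mem _ h22)) (SMulMemClass.smul_mem _ h23))
      (SMulMemClass.smul_mem _ h31)) (SMulMemClass.smul_mem _ h32))
      (SMulMemClass.smul_mem _ h33)
  · -- irredundancy
    intro T hT
    obtain ⟨x, hxS, hxT⟩ := Set.exists_of_ssubset hT
    have hTS : T ⊆ S := hT.subset
    have hmem : ∀ t ∈ T, t ∈ S ∧ t ≠ x := fun t ht =>
      ⟨hTS ht, fun h => hxT (h ▸ ht)⟩
    rw [hS] at hxS
    simp only [Set.mem_insert_iff, Set.mem_singleton_iff] at hxS
    rcases hxS with h | h | h | h | h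
    · -- x = A : use S1
      refine stmt19_adjoin_ne_top F (stmt19S1 F) ?_ !![0,1,0;0,0,0;0,0,0] ?_
      · intro t ht
        obtain ⟨htS, htx⟩ := hmem t ht
        rw [hS] at htS
        simp only [Set.mem_insert_iff, Set.mem_singleton_iff] at htS
        rcases htS with rfl | rfl | rfl | rfl | rfl
        · exact absurd h.symm htx
        all_goals constructor <;> norm_num [Matrix.vecHead, Matrix.vecTail, Matrix.cons_val_two]
      · intro hmem'
        obtain ⟨h1, _⟩ := hmem'
        simp at h1
    · -- x = B : use S2
      refine stmt19_adjoin_ne_top F (stmt19S2 F) ?_ !![0,0,0;1,0,0;0,0,0] ?_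
      · intro t ht
        obtain ⟨htS, htx⟩ := hmem t ht
        rw [hS] at htS
        simp only [Set.mem_insert_iff, Set.mem_singleton_iff] at htS
        rcases htS with rfl | rfl | rfl | rfl | rfl
        · constructor <;> norm_num [Matrix.vecHead, Matrix.vecTail, Matrix.cons_val_two]
        · exact absurd h.symm htx
        all_goals constructor <;> norm_num [Matrix.vecHead, Matrix.vecTail, Matrix.cons_val_two]
      · intro hmem'
        obtain ⟨h1, _⟩ := hmem'
        simp at h1
    · -- x = C : use S3
      refine stmt19_adjoin_ne_top F (stmt19S3 F) ?_ !![0,0,1;0,0,0;0,0,0] ?_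
      · intro t ht
        obtain ⟨htS, htx⟩ := hmem t ht
        rw [hS] at htS
        simp only [Set.mem_insert_iff, Set.mem_singleton_iff] at htS
        rcases htS with rfl | rfl | rfl | rfl | rfl
        · constructor <;> norm_num [Matrix.vecHead, Matrix.vecTail, Matrix.cons_val_two]
        · constructor <;> norm_num [Matrix.vecHead, Matrix.vecTail, Matrix.cons_val_two]
        · exact absurd h.symm htx
        all_goals constructor <;> norm_num [Matrix.vecHead, Matrix.vecTail, Matrix.cons_val_two]
      · intro hmem'
        obtain ⟨h1, _⟩ := hmem'
        simp at h1
    · -- x = D : use S4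
      refine stmt19_adjoin_ne_top F (stmt19S4 F) ?_ !![0,0,0;0,0,0;1,0,0] ?_
      · intro t ht
        obtain ⟨htS, htx⟩ := hmem t ht
        rw [hS] at htS
        simp only [Set.mem_insert_iff, Set.mem_singleton_iff] at htS
        rcases htS with rfl | rfl | rfl | rfl | rfl
        · constructor <;> norm_num [Matrix.vecHead, Matrix.vecTail, Matrix.cons_val_two]
        · constructor <;> norm_num [Matrix.vecHead, Matrix.vecTail, Matrix.cons_val_two]
        · constructor <;> norm_num [Matrix.vecHead, Matrix.vecTail, Matrix.cons_val_two]
        · exact absurd h.symm htx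
        · constructor <;> norm_num [Matrix.vecHead, Matrix.vecTail, Matrix.cons_val_two]
      · intro hmem'
        obtain ⟨h1, _⟩ := hmem'
        simp at h1
    · -- x = E : use S5
      refine stmt19_adjoin_ne_top F (stmt19S5 F) ?_ !![1,0,0;0,0,0;0,0,0] ?_
      · intro t ht
        obtain ⟨htS, htx⟩ := hmem t ht
        rw [hS] at htS
        simp only [Set.mem_insert_iff, Set.mem_singleton_iff] at htS
        rcases htS with rfl | rfl | rfl | rfl | rfl
        · constructor <;> norm_num [Matrix.vecHead, Matrix.vecTail, Matrix.cons_val_two]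
        · constructor <;> norm_num [Matrix.vecHead, Matrix.vecTail, Matrix.cons_val_two]
        · constructor <;> norm_num [Matrix.vecHead, Matrix.vecTail, Matrix.cons_val_two]
        · constructor <;> norm_num [Matrix.vecHead, Matrix.vecTail, Matrix.cons_val_two]
        · exact absurd h.symm htx
      · intro hmem'
        obtain ⟨h1, _⟩ := hmem'
        simp at h1
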